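/- arXiv:math/0504388 — 2 statements merged into one kernel-verified Lean document; each statement's English description precedes it below -/
import Mathlib

section
/- Let p be a prime and F a field of characteristic p. Let Q ∈ M₂(F[[X]]) be a matrix whose constant-coefficient matrix Q(0) ∈ M₂(F) is invertible and is similar over F to the diagonal matrix diag(λ, μ) for some λ, μ ∈ F. Then there exists an invertible matrix M ∈ M₂(F[[X]]) such that Q·φ(M) = M·diag(λ, μ). -/
open PowerSeries

/-- Substitution of the power series `g` (of positive order) into `f`: the coefficient
of `X^j` in `f(g)` is `Σ_{n ≤ j} f_n · [X^j](g^n)`. -/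
noncomputable def substSeries {R : Type*} [CommRing R] (g f : PowerSeries R) :
    PowerSeries R :=
  PowerSeries.mk fun j =>
    ∑ n ∈ Finset.range (j + 1),
      PowerSeries.coeff n f * PowerSeries.coeff j (g ^ n)

/-- `φ : F[[X]] → F[[X]]` is the substitution `X ↦ X^p` (the reduction mod `p` of
`X ↦ (1+X)^p - 1`). -/
noncomputable def phiP (p : ℕ) {F : Type*} [CommRing F] (f : PowerSeries F) :
    PowerSeries F :=
  substSeries (PowerSeries.X ^ p) f

lemma coeff_phiP {F : Type*} [CommRing F] {p : ℕ} (hp : 0 < p) (f : PowerSeries F) (j : ℕ) :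
    PowerSeries.coeff j (phiP p f) =
      if p ∣ j then PowerSeries.coeff (j / p) f else 0 := by
  unfold phiP substSeries
  rw [PowerSeries.coeff_mk]
  have hx : ∀ n : ℕ, ((PowerSeries.X : PowerSeries F) ^ p) ^ n
      = PowerSeries.X ^ (p * n) := fun n => by rw [← pow_mul]
  simp only [hx, PowerSeries.coeff_X_pow, mul_ite, mul_one, mul_zero]
  by_cases h : p ∣ j
  · obtain ⟨m, hm⟩ := h
    have hmem : m ∈ Finset.range (j + 1) := by
      refine Finset.mem_range.mpr (Nat.lt_succ_of_le ?_)
      calc m ≤ p * m := Nat.le_mul_of_pos_left m hp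
      _ = j := hm.symm
    rw [Finset.sum_eq_single_of_mem m hmem]
    · rw [if_pos hm, if_pos ⟨m, hm⟩, hm, Nat.mul_div_cancel_left m hp]
    · intro b _ hb
      rw [if_neg]
      intro hc
      exact hb (Nat.eq_of_mul_eq_mul_left hp (hm ▸ hc)).symm
  · rw [if_neg h, Finset.sum_eq_zero]
    intro n _
    rw [if_neg]
    intro hc
    exact h ⟨n, hc⟩

lemma sum_antidiag_div {α : Type*} [AddCommMonoid α] {p : ℕ} (hp : 0 < p) (j : ℕ)
    (g : ℕ → ℕ → α) :
    ∑ ab ∈ Finset.HasAntidiagonal.antidiagonal j, (if p ∣ ab.2 then g ab.1 (ab.2 / p) else 0)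
      = ∑ n ∈ Finset.range (j + 1), (if p * n ≤ j then g (j - p * n) n else 0) := by
  rw [← Finset.sum_filter, ← Finset.sum_filter]
  refine Finset.sum_nbij' (fun ab => ab.2 / p) (fun n => (j - p * n, p * n))
    ?_ ?_ ?_ ?_ ?_
  · rintro ⟨a, b⟩ hab
    simp only [Finset.mem_filter, Finset.HasAntidiagonal.mem_antidiagonal] at hab
    obtain ⟨hab, hdvd⟩ := hab
    have h1 : p * (b / p) = b := Nat.mul_div_cancel' hdvd
    have h2 : b / p ≤ b := Nat.div_le_self b p
    simp only [Finset.mem_filter, Finset.mem_range]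
    omega
  · intro n hn
    simp only [Finset.mem_filter, Finset.mem_range] at hn
    simp only [Finset.mem_filter, Finset.HasAntidiagonal.mem_antidiagonal]
    exact ⟨by omega, ⟨n, rfl⟩⟩
  · rintro ⟨a, b⟩ hab
    simp only [Finset.mem_filter, Finset.HasAntidiagonal.mem_antidiagonal] at hab
    obtain ⟨hab, hdvd⟩ := hab
    have h1 : p * (b / p) = b := Nat.mul_div_cancel' hdvd
    simp only [Prod.mk.injEq]
    omega
  · intro n hn
    simp only [Finset.mem_filter, Finset.mem_range] at hn
    simp only [Nat.mul_div_cancel_left n hp]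
  · rintro ⟨a, b⟩ hab
    simp only [Finset.mem_filter, Finset.HasAntidiagonal.mem_antidiagonal] at hab
    obtain ⟨hab, hdvd⟩ := hab
    have h1 : p * (b / p) = b := Nat.mul_div_cancel' hdvd
    have ha : a = j - p * (b / p) := by omega
    simp only
    rw [ha]

/-- The coefficients of the matrix `M`, defined by recursion:
`M₀ = S`, `M_{j} = (Σ_{pn ≤ j} Q_{j-pn} M_n) D⁻¹` for `j ≥ 1`. -/
noncomputable def auxM {R : Type*} [Ring R] (p : ℕ) (Qc : ℕ → R) (S Dinv : R) : ℕ → R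
  | 0 => S
  | (j + 1) =>
      (∑ n ∈ (Finset.range (j + 1)).attach,
        if p * n.1 ≤ j + 1 then Qc (j + 1 - p * n.1) * auxM p Qc S Dinv n.1 else 0) * Dinv
  termination_by j => j
  decreasing_by exact Finset.mem_range.mp n.2

lemma auxM_mul {R : Type*} [Ring R] {p : ℕ} (hp2 : 2 ≤ p) (Qc : ℕ → R) (S D Dinv : R)
    (hDinv : Dinv * D = 1) (hS : Qc 0 * S = S * D) (j : ℕ) :
    auxM p Qc S Dinv j * D
      = ∑ n ∈ Finset.range (j + 1),
          if p * n ≤ j then Qc (j - p * n) * auxM p Qc S Dinv n else 0 := by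
  cases j with
  | zero =>
    rw [Finset.sum_range_one]
    simp only [Nat.mul_zero, Nat.le_refl, if_true, Nat.sub_zero]
    rw [auxM, hS]
  | succ j =>
    rw [auxM, mul_assoc, hDinv, mul_one,
      Finset.sum_attach (Finset.range (j + 1))
        (fun n => if p * n ≤ j + 1 then Qc (j + 1 - p * n) * auxM p Qc S Dinv n else 0),
      Finset.sum_range_succ
        (fun n => if p * n ≤ j + 1 then Qc (j + 1 - p * n) * auxM p Qc S Dinv n else 0)
        (j + 1), if_neg, add_zero]
    intro h
    have h2 : 2 * (j + 1) ≤ p * (j + 1) := Nat.mul_le_mul hp2 (le_refl (j + 1))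
    omega

/-- If `Q(0)` is invertible and similar over `F` to `diag(λ, μ)`, then there is an
invertible `M ∈ M₂(F[[X]])` with `Q·φ(M) = M·diag(λ, μ)`. -/
theorem exists_diagonalization (p : ℕ) (hp : p.Prime) (F : Type*) [Field F] [CharP F p]
    (Q : Matrix (Fin 2) (Fin 2) (PowerSeries F)) (lam mu : F)
    (hQ : IsUnit (Q.map (PowerSeries.constantCoeff (R := F))))
    (hsim : ∃ S : Matrix (Fin 2) (Fin 2) F, IsUnit S ∧
      Q.map (PowerSeries.constantCoeff (R := F)) = S * Matrix.diagonal ![lam, mu] * S⁻¹) :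
    ∃ M : Matrix (Fin 2) (Fin 2) (PowerSeries F), IsUnit M ∧
      Q * M.map (phiP p) =
        M * Matrix.diagonal ![PowerSeries.C (R := F) lam, PowerSeries.C (R := F) mu] := by
  obtain ⟨S, hSu, hQ0⟩ := hsim
  have hp2 : 2 ≤ p := hp.two_le
  have hp0 : 0 < p := hp.pos
  set D : Matrix (Fin 2) (Fin 2) F := Matrix.diagonal ![lam, mu] with hDdef
  have hSdet : IsUnit S.det := (Matrix.isUnit_iff_isUnit_det S).mp hSu
  have hSS : S * S⁻¹ = 1 := Matrix.mul_nonsing_inv S hSdet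
  have hSS' : S⁻¹ * S = 1 := Matrix.nonsing_inv_mul S hSdet
  have hQS : Q.map (PowerSeries.constantCoeff (R := F)) * S = S * D := by
    rw [hQ0, mul_assoc, hSS', mul_one]
  have hSinvU : IsUnit S⁻¹ := ⟨⟨S⁻¹, S, hSS', hSS⟩, rfl⟩
  have hDu : IsUnit D := by
    have hD : D = S⁻¹ * (Q.map (PowerSeries.constantCoeff (R := F)) * S) := by
      rw [hQS, ← mul_assoc, hSS', one_mul]
    rw [hD, ← mul_assoc]
    exact (hSinvU.mul hQ).mul hSu
  have hDdet : IsUnit D.det := (Matrix.isUnit_iff_isUnit_det D).mp hDu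
  have hDD : D⁻¹ * D = 1 := Matrix.nonsing_inv_mul D hDdet
  set Qc : ℕ → Matrix (Fin 2) (Fin 2) F := fun m => Q.map (PowerSeries.coeff m) with hQcdef
  have hQc0 : Qc 0 = Q.map (PowerSeries.constantCoeff (R := F)) := by
    ext i k
    simp [hQcdef, Matrix.map_apply, PowerSeries.coeff_zero_eq_constantCoeff]
  have hS0 : Qc 0 * S = S * D := by rw [hQc0]; exact hQS
  set Mc : ℕ → Matrix (Fin 2) (Fin 2) F := auxM p Qc S D⁻¹ with hMcdef
  have key : ∀ j, Mc j * D
      = ∑ n ∈ Finset.range (j + 1), if p * n ≤ j then Qc (j - p * n) * Mc n else 0 :=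
    auxM_mul hp2 Qc S D D⁻¹ hDD hS0
  have hMc0 : Mc 0 = S := by rw [hMcdef, auxM]
  set M : Matrix (Fin 2) (Fin 2) (PowerSeries F) :=
    Matrix.of fun i l => PowerSeries.mk fun j => Mc j i l with hMdef
  have hM0 : M.map (PowerSeries.constantCoeff (R := F)) = S := by
    ext i l
    rw [Matrix.map_apply, hMdef, Matrix.of_apply,
      ← PowerSeries.coeff_zero_eq_constantCoeff_apply, PowerSeries.coeff_mk, hMc0]
  have hMu : IsUnit M := by
    have hdet : PowerSeries.constantCoeff (R := F) M.det = S.det := by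
      rw [RingHom.map_det, RingHom.mapMatrix_apply, hM0]
    rw [Matrix.isUnit_iff_isUnit_det, PowerSeries.isUnit_iff_constantCoeff, hdet]
    exact hSdet
  refine ⟨M, hMu, ?_⟩
  ext i l j
  have hv : (![PowerSeries.C (R := F) lam, PowerSeries.C (R := F) mu]) l
      = PowerSeries.C (R := F) (![lam, mu] l) := by fin_cases l <;> rfl
  -- RHS
  have hrhs : (PowerSeries.coeff j) ((M * Matrix.diagonal
        ![PowerSeries.C (R := F) lam, PowerSeries.C (R := F) mu]) i l) = (Mc j * D) i l := by
    rw [Matrix.mul_diagonal, hv, PowerSeries.coeff_mul_C, hMdef, Matrix.of_apply,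
      PowerSeries.coeff_mk, hDdef, Matrix.mul_diagonal]
  rw [hrhs, key j, Matrix.mul_apply, map_sum]
  -- LHS
  have hterm : ∀ k, (PowerSeries.coeff j) (Q i k * (M.map (phiP p)) k l)
      = ∑ n ∈ Finset.range (j + 1),
          if p * n ≤ j then (PowerSeries.coeff (j - p * n)) (Q i k) * Mc n k l else 0 := by
    intro k
    rw [Matrix.map_apply, PowerSeries.coeff_mul]
    rw [← sum_antidiag_div hp0 j (fun a n => (PowerSeries.coeff a) (Q i k) * Mc n k l)]
    refine Finset.sum_congr rfl fun ab _ => ?_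
    rw [coeff_phiP hp0, hMdef, Matrix.of_apply, PowerSeries.coeff_mk, mul_ite, mul_zero]
  rw [Finset.sum_congr rfl fun k _ => hterm k, Finset.sum_comm]
  rw [Matrix.sum_apply]
  refine Finset.sum_congr rfl fun n _ => ?_
  by_cases h : p * n ≤ j
  · rw [if_pos h]
    simp only [if_pos h, Matrix.mul_apply, hQcdef, Matrix.map_apply]
  · rw [if_neg h]
    simp only [if_neg h, Matrix.zero_apply, Finset.sum_const_zero]
end

section
/- For every prime p, the families (q_{2n}/p)_{n≥1} and (q_{2n−1}/p)_{n≥1} are multipliable in ℚ_p[[X]] equipped with the product topology of coefficientwise convergence, and their infinite products λ₊ = ∏_{n≥1} (q_{2n}/p) and λ₋ = ∏_{n≥1} (q_{2n−1}/p) both have constant coefficient 1 (hence are invertible in ℚ_p[[X]]). -/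
open PowerSeries

/-- `qSeries p n` is the polynomial
`q_n = ((1+X)^(p^n) - 1)/((1+X)^(p^(n-1)) - 1) = Φ_p((1+X)^(p^(n-1)))`,
viewed as a power series over `ℚ_p`. -/
noncomputable def qSeries (p : ℕ) [Fact p.Prime] (n : ℕ) : PowerSeries ℚ_[p] :=
  ∑ j ∈ Finset.range p, ((1 + PowerSeries.X) ^ (p ^ (n - 1))) ^ j

/-- The product topology of coefficientwise convergence on `ℚ_p[[X]]`. -/
noncomputable def coeffTopology (p : ℕ) [Fact p.Prime] :
    TopologicalSpace (PowerSeries ℚ_[p]) :=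
  TopologicalSpace.induced (fun f n => (PowerSeries.coeff (R := ℚ_[p]) n) f) Pi.topologicalSpace

/-- `λ₊ = ∏_{n ≥ 1} q_{2n}/p` in `ℚ_p[[X]]`. -/
noncomputable def lambdaPlus (p : ℕ) [Fact p.Prime] : PowerSeries ℚ_[p] :=
  letI := coeffTopology p
  ∏' n : ℕ, ((p : ℚ_[p])⁻¹ • qSeries p (2 * (n + 1)))

/-- `λ₋ = ∏_{n ≥ 1} q_{2n-1}/p` in `ℚ_p[[X]]`. -/
noncomputable def lambdaMinus (p : ℕ) [Fact p.Prime] : PowerSeries ℚ_[p] :=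
  letI := coeffTopology p
  ∏' n : ℕ, ((p : ℚ_[p])⁻¹ • qSeries p (2 * n + 1))

section Aux
open Filter NNReal Topology

variable (p : ℕ) [Fact p.Prime]

lemma coeff_one_add_X_pow (m k : ℕ) :
    (PowerSeries.coeff (R := ℚ_[p]) k) ((1 + PowerSeries.X) ^ m) = (m.choose k : ℚ_[p]) := by
  rw [add_comm, add_pow]
  simp only [one_pow, mul_one, ← map_natCast (PowerSeries.C (R := ℚ_[p])), map_sum,
    PowerSeries.coeff_mul_C, PowerSeries.coeff_X_pow, ite_mul, one_mul, zero_mul,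
    Finset.sum_ite_eq, Finset.mem_range]
  split
  · simp
  · rw [Nat.choose_eq_zero_of_lt (by omega)]; simp

lemma coeff_qSeries (n k : ℕ) :
    (PowerSeries.coeff (R := ℚ_[p]) k) (qSeries p n) =
      ∑ j ∈ Finset.range p, (((p ^ (n - 1) * j).choose k : ℕ) : ℚ_[p]) := by
  unfold qSeries
  rw [map_sum]
  refine Finset.sum_congr rfl fun j _ => ?_
  rw [← pow_mul, coeff_one_add_X_pow]

lemma nnnorm_nat_le_one (a : ℕ) : ‖(a : ℚ_[p])‖₊ ≤ 1 := by
  rw [← NNReal.coe_le_coe, coe_nnnorm, NNReal.coe_one]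
  simpa using Padic.norm_int_le_one (p := p) (a : ℤ)

lemma nnnorm_choose_mul_le (a k : ℕ) (hk : k ≠ 0) :
    ‖((a.choose k : ℕ) : ℚ_[p])‖₊ * ‖(k : ℚ_[p])‖₊ ≤ ‖(a : ℚ_[p])‖₊ := by
  obtain ⟨k, rfl⟩ := Nat.exists_eq_succ_of_ne_zero hk
  cases a with
  | zero => simp [Nat.choose_eq_zero_of_lt (Nat.succ_pos k)]
  | succ n =>
    have h := Nat.add_one_mul_choose_eq n k
    have h2 : ((n + 1 : ℕ) : ℚ_[p]) * ((n.choose k : ℕ) : ℚ_[p])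
        = (((n + 1).choose (k + 1) : ℕ) : ℚ_[p]) * ((k + 1 : ℕ) : ℚ_[p]) := by
      exact_mod_cast congrArg (Nat.cast : ℕ → ℚ_[p]) h
    calc ‖(((n + 1).choose (k + 1) : ℕ) : ℚ_[p])‖₊ * ‖((k + 1 : ℕ) : ℚ_[p])‖₊
        = ‖(((n + 1).choose (k + 1) : ℕ) : ℚ_[p]) * ((k + 1 : ℕ) : ℚ_[p])‖₊ := (nnnorm_mul _ _).symm
      _ = ‖((n + 1 : ℕ) : ℚ_[p]) * ((n.choose k : ℕ) : ℚ_[p])‖₊ := by rw [h2]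
      _ = ‖((n + 1 : ℕ) : ℚ_[p])‖₊ * ‖((n.choose k : ℕ) : ℚ_[p])‖₊ := nnnorm_mul _ _
      _ ≤ ‖((n + 1 : ℕ) : ℚ_[p])‖₊ * 1 := mul_le_mul_right (nnnorm_nat_le_one p _) _
      _ = ‖((n + 1 : ℕ) : ℚ_[p])‖₊ := mul_one _

lemma nnnorm_k_ne_zero (k : ℕ) (hk : k ≠ 0) : ‖(k : ℚ_[p])‖₊ ≠ 0 := by
  simp only [ne_eq, nnnorm_eq_zero]
  exact_mod_cast hk

/-- Bound on the nonconstant coefficients of `p⁻¹ • qSeries p m`. -/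
lemma coeff_smul_qSeries_bound (m k : ℕ) (hk : k ≠ 0) :
    ‖(PowerSeries.coeff (R := ℚ_[p]) k) ((p : ℚ_[p])⁻¹ • qSeries p m)‖₊ ≤
      (p : ℝ≥0) * (‖(k : ℚ_[p])‖₊⁻¹ * ((p : ℝ≥0)⁻¹) ^ (m - 1)) := by
  have hp1 : 1 < p := (Fact.out : p.Prime).one_lt
  have hpQ : ((p : ℚ_[p])) ≠ 0 := by exact_mod_cast (Nat.cast_ne_zero (R := ℚ_[p])).2 (by omega)
  have hnp : ‖(p : ℚ_[p])‖₊ = (p : ℝ≥0)⁻¹ := by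
    ext
    simpa using Padic.norm_p (p := p)
  rw [PowerSeries.coeff_smul, smul_eq_mul, nnnorm_mul, nnnorm_inv, hnp, inv_inv,
    coeff_qSeries]
  refine mul_le_mul_right ?_ _
  refine IsUltrametricDist.nnnorm_sum_le_of_forall_le fun j _ => ?_
  have h1 := nnnorm_choose_mul_le p (p ^ (m - 1) * j) k hk
  have h2 : ‖((p ^ (m - 1) * j : ℕ) : ℚ_[p])‖₊ ≤ ((p : ℝ≥0)⁻¹) ^ (m - 1) := by
    push_cast
    rw [nnnorm_mul, nnnorm_pow, hnp]
    exact (mul_le_mul_right (nnnorm_nat_le_one p j) _).trans (by simp)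
  rw [← le_div_iff₀ (pos_iff_ne_zero.mpr (nnnorm_k_ne_zero p k hk))] at h1
  refine h1.trans ?_
  rw [div_eq_mul_inv, mul_comm]
  exact mul_le_mul_right h2 _

lemma constantCoeff_smul_qSeries (m : ℕ) :
    PowerSeries.constantCoeff (R := ℚ_[p]) ((p : ℚ_[p])⁻¹ • qSeries p m) = 1 := by
  have hp1 : 1 < p := (Fact.out : p.Prime).one_lt
  have hpQ : ((p : ℚ_[p])) ≠ 0 := by exact_mod_cast (Nat.cast_ne_zero (R := ℚ_[p])).2 (by omega)
  have : PowerSeries.constantCoeff (R := ℚ_[p]) (qSeries p m) = p := by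
    rw [← PowerSeries.coeff_zero_eq_constantCoeff_apply, coeff_qSeries]
    simp
  rw [← PowerSeries.coeff_zero_eq_constantCoeff_apply, PowerSeries.coeff_smul,
    PowerSeries.coeff_zero_eq_constantCoeff_apply, this, smul_eq_mul, inv_mul_cancel₀ hpQ]

/-- bounded coefficients of a product -/
lemma bd_mul {k : ℕ} {C D : ℝ≥0} {x y : PowerSeries ℚ_[p]}
    (hx : ∀ j ≤ k, ‖PowerSeries.coeff (R := ℚ_[p]) j x‖₊ ≤ C)
    (hy : ∀ j ≤ k, ‖PowerSeries.coeff (R := ℚ_[p]) j y‖₊ ≤ D) :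
    ∀ j ≤ k, ‖PowerSeries.coeff (R := ℚ_[p]) j (x * y)‖₊ ≤ C * D := by
  intro j hj
  rw [PowerSeries.coeff_mul]
  refine IsUltrametricDist.nnnorm_sum_le_of_forall_le fun q hq => ?_
  rw [Finset.HasAntidiagonal.mem_antidiagonal] at hq
  rw [nnnorm_mul]
  exact mul_le_mul' (hx _ (by omega)) (hy _ (by omega))

lemma bd_one (k : ℕ) : ∀ j ≤ k, ‖PowerSeries.coeff (R := ℚ_[p]) j (1 : PowerSeries ℚ_[p])‖₊ ≤ 1 := by
  intro j _
  rw [PowerSeries.coeff_one]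
  split <;> simp

lemma bd_prod {k : ℕ} {F : Finset ℕ} {f : ℕ → PowerSeries ℚ_[p]} {D : ℕ → ℝ≥0}
    (h : ∀ i ∈ F, ∀ j ≤ k, ‖PowerSeries.coeff (R := ℚ_[p]) j (f i)‖₊ ≤ D i) :
    ∀ j ≤ k, ‖PowerSeries.coeff (R := ℚ_[p]) j (∏ i ∈ F, f i)‖₊ ≤ ∏ i ∈ F, D i := by
  induction F using Finset.cons_induction with
  | empty => simpa using bd_one p k
  | cons a F ha ih =>
    rw [Finset.prod_cons, Finset.prod_cons]
    exact bd_mul p (h a (Finset.mem_cons_self a F))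
      (ih fun i hi => h i (Finset.mem_cons_of_mem hi))

lemma bd_factor_le_one {k : ℕ} {δ : ℝ≥0} (hδ : δ ≤ 1) {x : PowerSeries ℚ_[p]}
    (h : ∀ j ≤ k, ‖PowerSeries.coeff (R := ℚ_[p]) j (x - 1)‖₊ ≤ δ) :
    ∀ j ≤ k, ‖PowerSeries.coeff (R := ℚ_[p]) j x‖₊ ≤ 1 := by
  intro j hj
  have : x = (x - 1) + 1 := by ring
  rw [this, map_add]
  refine (IsUltrametricDist.nnnorm_add_le_max _ _).trans ?_
  exact max_le ((h j hj).trans hδ) (bd_one p k j hj)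

lemma bd_prod_sub_one {k : ℕ} {δ : ℝ≥0} (hδ : δ ≤ 1) {F : Finset ℕ}
    {f : ℕ → PowerSeries ℚ_[p]}
    (h : ∀ i ∈ F, ∀ j ≤ k, ‖PowerSeries.coeff (R := ℚ_[p]) j (f i - 1)‖₊ ≤ δ) :
    ∀ j ≤ k, ‖PowerSeries.coeff (R := ℚ_[p]) j ((∏ i ∈ F, f i) - 1)‖₊ ≤ δ := by
  induction F using Finset.cons_induction with
  | empty => intro j hj; simp
  | cons a F ha ih =>
    intro j hj
    have key : (∏ i ∈ Finset.cons a F ha, f i) - 1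
        = f a * ((∏ i ∈ F, f i) - 1) + (f a - 1) := by
      rw [Finset.prod_cons]; ring
    rw [key, map_add]
    refine (IsUltrametricDist.nnnorm_add_le_max _ _).trans (max_le ?_ ?_)
    · have h1 := bd_mul p (bd_factor_le_one p hδ (h a (Finset.mem_cons_self a F)))
        (ih fun i hi => h i (Finset.mem_cons_of_mem hi)) j hj
      simpa using h1
    · exact h a (Finset.mem_cons_self a F) j hj

/-- Main auxiliary result: a family of power series with constant coefficient `1` whose
nonconstant coefficients tend to `0` is multipliable for the coefficientwise topology,
with product of constant coefficient `1`. -/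
theorem aux_hasProd (f : ℕ → PowerSeries ℚ_[p])
    (h0 : ∀ n, PowerSeries.constantCoeff (R := ℚ_[p]) (f n) = 1)
    (hs : ∀ k, k ≠ 0 → Tendsto (fun n => PowerSeries.coeff (R := ℚ_[p]) k (f n)) atTop (𝓝 0)) :
    ∃ L, (@HasProd (PowerSeries ℚ_[p]) ℕ _ (coeffTopology p) f L (SummationFilter.unconditional ℕ)) ∧
      PowerSeries.constantCoeff (R := ℚ_[p]) L = 1 := by
  classical
  set u : ℕ → Finset ℕ → ℚ_[p] := fun k F => PowerSeries.coeff (R := ℚ_[p]) k (∏ i ∈ F, f i) with hu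
  -- smallness of the tail factors
  have small : ∀ k : ℕ, ∀ δ : ℝ≥0, 0 < δ →
      ∃ M : ℕ, ∀ n ≥ M, ∀ j ≤ k, ‖PowerSeries.coeff (R := ℚ_[p]) j (f n - 1)‖₊ ≤ δ := by
    intro k δ hδ
    have hev : ∀ᶠ n in atTop, ∀ j ∈ Finset.range (k + 1),
        ‖PowerSeries.coeff (R := ℚ_[p]) j (f n - 1)‖₊ ≤ δ := by
      rw [Finset.eventually_all]
      intro j _
      rcases Nat.eq_zero_or_pos j with hj | hj
      · subst hj
        filter_upwards with n
        simp [PowerSeries.coeff_zero_eq_constantCoeff_apply, h0 n]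
      · have hj' : j ≠ 0 := hj.ne'
        have h1 : ∀ n, PowerSeries.coeff (R := ℚ_[p]) j (f n - 1) = PowerSeries.coeff (R := ℚ_[p]) j (f n) := by
          intro n
          rw [map_sub, PowerSeries.coeff_one, if_neg hj', sub_zero]
        have h2 := Metric.tendsto_atTop.mp (hs j hj') δ (by exact_mod_cast hδ)
        obtain ⟨N, hN⟩ := h2
        filter_upwards [eventually_ge_atTop N] with n hn
        have := hN n hn
        rw [dist_zero_right] at this
        rw [h1 n, ← NNReal.coe_le_coe, coe_nnnorm]
        exact this.le
    obtain ⟨M, hM⟩ := eventually_atTop.mp hev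
    exact ⟨M, fun n hn j hj => hM n hn j (Finset.mem_range.mpr (by omega))⟩
  -- each coefficient of the partial products is a Cauchy net
  have cauchy : ∀ k : ℕ, CauchySeq (u k) := by
    intro k
    obtain ⟨M₀, hM₀⟩ := small k 1 one_pos
    set D : ℕ → ℝ≥0 := fun i =>
      if i < M₀ then ((Finset.range (k + 1)).sup fun j => ‖PowerSeries.coeff (R := ℚ_[p]) j (f i)‖₊) ⊔ 1
      else 1 with hD
    have hD1 : ∀ i, 1 ≤ D i := by
      intro i
      simp only [hD]
      split
      · exact le_sup_right
      · exact le_refl 1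
    have hDf : ∀ i, ∀ j ≤ k, ‖PowerSeries.coeff (R := ℚ_[p]) j (f i)‖₊ ≤ D i := by
      intro i j hj
      simp only [hD]
      split
      · exact le_trans (Finset.le_sup (f := fun j => ‖PowerSeries.coeff (R := ℚ_[p]) j (f i)‖₊)
          (Finset.mem_range.mpr (by omega))) le_sup_left
      · rename_i hi
        rcases Nat.eq_zero_or_pos j with hj0 | hj0
        · subst hj0
          simp [PowerSeries.coeff_zero_eq_constantCoeff_apply, h0 i]
        · have : PowerSeries.coeff (R := ℚ_[p]) j (f i)
              = PowerSeries.coeff (R := ℚ_[p]) j (f i - 1) := by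
            rw [map_sub, PowerSeries.coeff_one, if_neg hj0.ne', sub_zero]
          rw [this]
          exact hM₀ i (by omega) j hj
    set B : ℝ≥0 := ∏ i ∈ Finset.range M₀, D i with hB
    have hB1 : 1 ≤ B := Finset.one_le_prod' fun i _ => hD1 i
    have hBne : B ≠ 0 := by positivity
    have hBd : ∀ F : Finset ℕ, ∀ j ≤ k, ‖PowerSeries.coeff (R := ℚ_[p]) j (∏ i ∈ F, f i)‖₊ ≤ B := by
      intro F j hj
      refine (bd_prod p (fun i _ => hDf i) j hj).trans ?_
      have e1 : ∏ i ∈ F, D i = ∏ i ∈ F ∩ Finset.range M₀, D i := by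
        refine (Finset.prod_subset Finset.inter_subset_left fun i hi hni => ?_).symm
        simp only [hD]
        rw [if_neg]
        intro hlt
        exact hni (Finset.mem_inter.mpr ⟨hi, Finset.mem_range.mpr hlt⟩)
      rw [e1, hB]
      exact Finset.prod_le_prod_of_subset_of_one_le' Finset.inter_subset_right
        fun i _ _ => hD1 i
    rw [Metric.cauchySeq_iff]
    intro ε hε
    set εn : ℝ≥0 := ε.toNNReal with hεn
    have hεn0 : 0 < εn := Real.toNNReal_pos.mpr hε
    set δ : ℝ≥0 := 1 ⊓ ((εn / 4) / B) with hδdef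
    have hδ0 : 0 < δ := by
      apply lt_min one_pos
      positivity
    have hδ1 : δ ≤ 1 := min_le_left _ _
    have hδB : B * δ ≤ εn / 4 := by
      have := min_le_right 1 ((εn / 4) / B)
      calc B * δ ≤ B * ((εn / 4) / B) := mul_le_mul_right this _
        _ ≤ εn / 4 := by
            rw [mul_comm]
            exact (le_div_iff₀ (pos_iff_ne_zero.mpr hBne)).mp le_rfl
    obtain ⟨M, hM⟩ := small k δ hδ0
    refine ⟨Finset.range M, fun F hF G hG => ?_⟩
    have key : ∀ H : Finset ℕ, Finset.range M ⊆ H →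
        ‖u k H - u k (Finset.range M)‖₊ ≤ εn / 4 := by
      intro H hH
      have hsplit : ∏ i ∈ H, f i
          = (∏ i ∈ Finset.range M, f i) * ∏ i ∈ H \ Finset.range M, f i := by
        rw [← Finset.prod_union Finset.disjoint_sdiff, Finset.union_sdiff_of_subset hH]
      have e : u k H - u k (Finset.range M)
          = PowerSeries.coeff (R := ℚ_[p]) k ((∏ i ∈ Finset.range M, f i)
              * ((∏ i ∈ H \ Finset.range M, f i) - 1)) := by
        rw [hu]
        simp only [mul_sub, mul_one, map_sub, hsplit]
      rw [e]
      have htail : ∀ i ∈ H \ Finset.range M, ∀ j ≤ k,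
          ‖PowerSeries.coeff (R := ℚ_[p]) j (f i - 1)‖₊ ≤ δ := by
        intro i hi
        rw [Finset.mem_sdiff, Finset.mem_range] at hi
        exact hM i (by omega)
      have := bd_mul p (fun j hj => hBd (Finset.range M) j hj)
        (bd_prod_sub_one p hδ1 htail) k le_rfl
      exact this.trans hδB
    have h1 := key F hF
    have h2 := key G hG
    have hd : dist (u k F) (u k G) ≤ (εn : ℝ) / 4 + (εn : ℝ) / 4 := by
      calc dist (u k F) (u k G)
          ≤ dist (u k F) (u k (Finset.range M)) + dist (u k (Finset.range M)) (u k G) :=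
            dist_triangle _ _ _
        _ ≤ (εn : ℝ) / 4 + (εn : ℝ) / 4 := by
            gcongr
            · rw [dist_eq_norm, ← coe_nnnorm]
              exact_mod_cast h1
            · rw [dist_comm, dist_eq_norm, ← coe_nnnorm]
              exact_mod_cast h2
    have hεeq : (εn : ℝ) = ε := Real.coe_toNNReal _ hε.le
    rw [hεeq] at hd
    linarith
  have hlim : ∀ k, ∃ a : ℚ_[p], Tendsto (u k) atTop (𝓝 a) :=
    fun k => cauchySeq_tendsto_of_complete (cauchy k)
  choose a ha using hlim
  refine ⟨PowerSeries.mk a, ?_, ?_⟩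
  · show Tendsto (fun F : Finset ℕ => ∏ i ∈ F, f i) atTop (@nhds _ (coeffTopology p) _)
    have hnhds : @nhds _ (coeffTopology p) (PowerSeries.mk a) =
        Filter.comap (fun g (n : ℕ) => PowerSeries.coeff (R := ℚ_[p]) n g)
          (𝓝 (fun n => PowerSeries.coeff (R := ℚ_[p]) n (PowerSeries.mk a))) :=
      nhds_induced _ _
    rw [hnhds, tendsto_comap_iff]
    rw [tendsto_pi_nhds]
    intro k
    simpa [Function.comp, PowerSeries.coeff_mk] using ha k
  · have hu0 : u 0 = fun _ => 1 := by
      funext F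
      rw [hu]
      simp only [PowerSeries.coeff_zero_eq_constantCoeff_apply, map_prod]
      exact Finset.prod_eq_one fun i _ => h0 i
    have h1 : Tendsto (u 0) atTop (𝓝 (1 : ℚ_[p])) := by
      rw [hu0]; exact tendsto_const_nhds
    have := tendsto_nhds_unique (ha 0) h1
    rw [← PowerSeries.coeff_zero_eq_constantCoeff_apply, PowerSeries.coeff_mk]
    exact this

lemma t2_coeffTopology : @T2Space (PowerSeries ℚ_[p]) (coeffTopology p) := by
  letI := coeffTopology p
  have hemb : Topology.IsEmbedding (fun g (n : ℕ) => PowerSeries.coeff (R := ℚ_[p]) n g) := by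
    refine ⟨⟨rfl⟩, ?_⟩
    intro x y hxy
    ext n
    exact congrFun hxy n
  exact hemb.t2Space

/-- Tendsto-to-zero of coefficients for the two families. -/
lemma tendsto_coeff_family (m : ℕ → ℕ) (hm : ∀ n, n + 1 ≤ m n) (k : ℕ) (hk : k ≠ 0) :
    Tendsto (fun n => PowerSeries.coeff (R := ℚ_[p]) k ((p : ℚ_[p])⁻¹ • qSeries p (m n)))
      atTop (𝓝 0) := by
  have hp1 : 1 < p := (Fact.out : p.Prime).one_lt
  set c : ℝ := (p : ℝ) * ((‖(k : ℚ_[p])‖₊⁻¹ : ℝ≥0) : ℝ) with hc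
  have hc0 : 0 ≤ c := by positivity
  refine squeeze_zero_norm (a := fun n => c * ((p : ℝ)⁻¹) ^ n) ?_ ?_
  · intro n
    have h1 := coeff_smul_qSeries_bound p (m n) k hk
    have h2 : ((p : ℝ≥0)⁻¹) ^ (m n - 1) ≤ ((p : ℝ≥0)⁻¹) ^ n := by
      refine pow_le_pow_of_le_one (by positivity) ?_ (by have := hm n; omega)
      rw [inv_le_one_iff₀]
      right
      exact_mod_cast hp1.le
    have h3 : ‖PowerSeries.coeff (R := ℚ_[p]) k ((p : ℚ_[p])⁻¹ • qSeries p (m n))‖₊ ≤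
        (p : ℝ≥0) * (‖(k : ℚ_[p])‖₊⁻¹ * ((p : ℝ≥0)⁻¹) ^ n) :=
      h1.trans (mul_le_mul_right (mul_le_mul_right h2 _) _)
    rw [← coe_nnnorm]
    calc (‖PowerSeries.coeff (R := ℚ_[p]) k ((p : ℚ_[p])⁻¹ • qSeries p (m n))‖₊ : ℝ)
        ≤ (((p : ℝ≥0) * (‖(k : ℚ_[p])‖₊⁻¹ * ((p : ℝ≥0)⁻¹) ^ n) : ℝ≥0) : ℝ) := by
          exact_mod_cast h3
      _ = c * ((p : ℝ)⁻¹) ^ n := by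
          simp only [NNReal.coe_mul, NNReal.coe_pow, NNReal.coe_inv, coe_nnnorm,
            NNReal.coe_natCast, hc]
          ring
  · have : Tendsto (fun n : ℕ => ((p : ℝ)⁻¹) ^ n) atTop (𝓝 0) := by
      refine tendsto_pow_atTop_nhds_zero_of_lt_one (by positivity) ?_
      rw [inv_lt_one_iff₀]
      right
      exact_mod_cast hp1
    simpa using this.const_mul c

end Aux

open Filter NNReal Topology in
/-- The families `(q_{2n}/p)_{n ≥ 1}` and `(q_{2n-1}/p)_{n ≥ 1}` are multipliable in
`ℚ_p[[X]]` for the product topology of coefficientwise convergence, and the infinite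
products `λ₊` and `λ₋` both have constant coefficient `1`. -/
theorem lambdaPlus_lambdaMinus_multipliable_and_constantCoeff
    (p : ℕ) [Fact p.Prime] :
    (@Multipliable (PowerSeries ℚ_[p]) ℕ _ (coeffTopology p)
      (fun n : ℕ => ((p : ℚ_[p])⁻¹ • qSeries p (2 * (n + 1)))) (SummationFilter.unconditional ℕ)) ∧
    (@Multipliable (PowerSeries ℚ_[p]) ℕ _ (coeffTopology p)
      (fun n : ℕ => ((p : ℚ_[p])⁻¹ • qSeries p (2 * n + 1))) (SummationFilter.unconditional ℕ)) ∧
    PowerSeries.constantCoeff (R := ℚ_[p]) (lambdaPlus p) = 1 ∧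
    PowerSeries.constantCoeff (R := ℚ_[p]) (lambdaMinus p) = 1 := by
  letI := coeffTopology p
  haveI : T2Space (PowerSeries ℚ_[p]) := t2_coeffTopology p
  obtain ⟨L₁, hL₁, hL₁c⟩ := aux_hasProd p (fun n => (p : ℚ_[p])⁻¹ • qSeries p (2 * (n + 1)))
    (fun n => constantCoeff_smul_qSeries p _)
    (fun k hk => tendsto_coeff_family p (fun n => 2 * (n + 1)) (fun n => by omega) k hk)
  obtain ⟨L₂, hL₂, hL₂c⟩ := aux_hasProd p (fun n => (p : ℚ_[p])⁻¹ • qSeries p (2 * n + 1))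
    (fun n => constantCoeff_smul_qSeries p _)
    (fun k hk => tendsto_coeff_family p (fun n => 2 * n + 1) (fun n => by omega) k hk)
  have e1 : lambdaPlus p = L₁ := hL₁.tprod_eq
  have e2 : lambdaMinus p = L₂ := hL₂.tprod_eq
  exact ⟨⟨L₁, hL₁⟩, ⟨L₂, hL₂⟩, by rw [e1]; exact hL₁c, by rw [e2]; exact hL₂c⟩
end
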